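/- Let β > 1, N ≥ 2, x_k = (k/N)^β for k = 0,…,N, and set γ̃ = 1 − 1/β ∈ (0,1). Then for every k ≥ 2 and every x ∈ [x_{k−1}, x_k], the mesh width satisfies h_k = x_k − x_{k−1} ≤ β 2^{βγ̃} N^{−1} x^{γ̃}. -/

import Mathlib

open Real

lemma rpow_sub_rpow_le (β a b : ℝ) (hβ : 1 ≤ β) (hb : 0 ≤ b) (hab : b ≤ a) :
    a ^ β - b ^ β ≤ β * a ^ (β - 1) * (a - b) := by
  rcases eq_or_lt_of_le hab with rfl | hlt
  · simp only [sub_self, mul_zero, le_refl]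
  · have hderiv : ∀ t : ℝ, HasDerivAt (fun s : ℝ => s ^ β) (β * t ^ (β - 1)) t := by
      intro t
      simpa [mul_comm] using Real.hasDerivAt_rpow_const (x := t) (p := β) (Or.inr hβ)
    obtain ⟨c, hc, hceq⟩ := exists_hasDerivAt_eq_slope (fun s : ℝ => s ^ β)
      (fun t => β * t ^ (β - 1)) hlt
      (fun t _ => (hderiv t).continuousAt.continuousWithinAt)
      (fun t _ => hderiv t)
    have hc0 : 0 ≤ c := le_trans hb hc.1.le
    have hle : c ^ (β - 1) ≤ a ^ (β - 1) :=
      Real.rpow_le_rpow hc0 hc.2.le (by linarith)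
    have hslope : a ^ β - b ^ β = β * c ^ (β - 1) * (a - b) := by
      rw [eq_div_iff (by linarith : a - b ≠ 0)] at hceq
      linarith [hceq]
    rw [hslope]
    have : β * c ^ (β - 1) ≤ β * a ^ (β - 1) :=
      mul_le_mul_of_nonneg_left hle (by linarith)
    exact mul_le_mul_of_nonneg_right this (by linarith)

/-- For the `β`-graded mesh `x_k = (k/N)^β` with `β > 1`, `N ≥ 2`, `γ̃ = 1 − 1/β`:
for every `k ≥ 2` and every `y ∈ [x_{k−1}, x_k]`,
`x_k − x_{k−1} ≤ β 2^{βγ̃} N⁻¹ y^{γ̃}`. -/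
theorem graded_mesh_pointwise_bound (β : ℝ) (hβ : 1 < β) (N : ℕ) (hN : 2 ≤ N)
    (x : ℕ → ℝ) (hx : ∀ k, x k = ((k : ℝ) / N) ^ β)
    (γ : ℝ) (hγ : γ = 1 - 1 / β) :
    γ ∈ Set.Ioo (0 : ℝ) 1 ∧
    ∀ k, 2 ≤ k → k ≤ N → ∀ y ∈ Set.Icc (x (k - 1)) (x k),
      x k - x (k - 1) ≤ β * (2 : ℝ) ^ (β * γ) * (N : ℝ)⁻¹ * y ^ γ := by
  have hβ0 : (0 : ℝ) < β := by linarith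
  have hγmem : γ ∈ Set.Ioo (0 : ℝ) 1 := by
    constructor
    · rw [hγ]; have : 1 / β < 1 := by rw [div_lt_one hβ0]; exact hβ
      linarith
    · rw [hγ]; have : 0 < 1 / β := by positivity
      linarith
  refine ⟨hγmem, fun k hk2 hkN y hy => ?_⟩
  have hN0 : (0 : ℝ) < N := by positivity
  set a : ℝ := (k : ℝ) / N with ha
  set b : ℝ := ((k - 1 : ℕ) : ℝ) / N with hb
  have hkc : ((k - 1 : ℕ) : ℝ) = (k : ℝ) - 1 := by
    have : (1 : ℕ) ≤ k := by omega
    push_cast [Nat.cast_sub this]; ring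
  have hk1 : (1 : ℝ) ≤ (k : ℝ) - 1 := by
    have : (2 : ℝ) ≤ (k : ℝ) := by exact_mod_cast hk2
    linarith
  have hb0 : 0 < b := by rw [hb, hkc]; positivity
  have hab : b ≤ a := by
    rw [ha, hb, hkc]; gcongr; linarith
  have hamb : a - b = (N : ℝ)⁻¹ := by
    rw [ha, hb, hkc]; field_simp; ring
  have hβγ : β * γ = β - 1 := by
    rw [hγ]; field_simp
  -- main chain
  have h1 : x k - x (k - 1) ≤ β * a ^ (β - 1) * (N : ℝ)⁻¹ := by
    rw [hx k, hx (k - 1), ← ha, ← hb, ← hamb]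
    exact rpow_sub_rpow_le β a b hβ.le hb0.le hab
  have ha2b : a ≤ 2 * b := by
    rw [ha, hb, hkc]
    rw [div_le_iff₀ hN0]
    have : (k : ℝ) ≤ 2 * ((k : ℝ) - 1) := by linarith
    calc (k : ℝ) ≤ 2 * ((k : ℝ) - 1) := this
      _ = 2 * (((k : ℝ) - 1) / N) * N := by field_simp
  have h2 : a ^ (β - 1) ≤ 2 ^ (β - 1) * b ^ (β - 1) := by
    calc a ^ (β - 1) ≤ (2 * b) ^ (β - 1) :=
          Real.rpow_le_rpow (by positivity) ha2b (by linarith)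
      _ = 2 ^ (β - 1) * b ^ (β - 1) :=
          Real.mul_rpow (by norm_num) hb0.le
  have h3 : b ^ (β - 1) ≤ y ^ γ := by
    have hbβ : b ^ (β - 1) = (x (k - 1)) ^ γ := by
      rw [hx (k - 1), ← hb, ← Real.rpow_mul hb0.le, hβγ]
    rw [hbβ]
    exact Real.rpow_le_rpow (by rw [hx (k-1)]; positivity) hy.1 hγmem.1.le
  calc x k - x (k - 1) ≤ β * a ^ (β - 1) * (N : ℝ)⁻¹ := h1
    _ ≤ β * (2 ^ (β - 1) * y ^ γ) * (N : ℝ)⁻¹ := by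
        have : a ^ (β - 1) ≤ 2 ^ (β - 1) * y ^ γ := by
          calc a ^ (β - 1) ≤ 2 ^ (β - 1) * b ^ (β - 1) := h2
            _ ≤ 2 ^ (β - 1) * y ^ γ := by
                have h2p : (0:ℝ) ≤ 2 ^ (β - 1) := by positivity
                exact mul_le_mul_of_nonneg_left h3 h2p
        have hNi : (0:ℝ) ≤ (N : ℝ)⁻¹ := by positivity
        exact mul_le_mul_of_nonneg_right (mul_le_mul_of_nonneg_left this hβ0.le) hNi
    _ = β * (2 : ℝ) ^ (β * γ) * (N : ℝ)⁻¹ * y ^ γ := by rw [hβγ]; ring
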